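/- arXiv:0706.2648 — 7 statements merged into one kernel-verified Lean document; each statement's English description precedes it below -/
import Mathlib

section
/- Let C be a category, I a nonempty totally ordered set, and F an I-filtration of an object X of C. If F is left locally constant (resp. right locally constant) then F is left continuous (resp. right continuous). Conversely, if F is of finite length and left continuous (resp. right continuous), then F is left locally constant (resp. right locally constant). -/
open CategoryTheory CategoryTheory.Limits

universe v u

/-- The index category `I* = I ∪ {−∞}`, in which `Hom(i,j)` is a singleton iff
`i ≥ j`: we realize it as the order dual of `WithBot I`, viewed as a preorder
category.  The element `−∞` is `⊥ : WithBot I`. -/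
abbrev IStar (I : Type*) [LinearOrder I] : Type _ := (WithBot I)ᵒᵈ

/-- An `I`-filtration of an object `X` of `C`: a functor `F : I* ⥤ C` with
`F(−∞) = X` sending every morphism of `I*` to a monomorphism. -/
structure CatFiltration (I : Type*) [LinearOrder I]
    (C : Type u) [Category.{v} C] (X : C) where
  func : IStar I ⥤ C
  bot_eq : func.obj (OrderDual.toDual (⊥ : WithBot I)) = X
  mono_map : ∀ {a b : IStar I} (f : a ⟶ b), Mono (func.map f)

/-- `I` is left dense at `i` if `I_{<i}` is nonempty and `i` is its least upper
bound. -/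
def LeftDenseAt (I : Type*) [LinearOrder I] (i : I) : Prop :=
  (Set.Iio i).Nonempty ∧ IsLUB (Set.Iio i) i

/-- `I` is right dense at `i` if `I_{>i}` is nonempty and `i` is its greatest lower
bound. -/
def RightDenseAt (I : Type*) [LinearOrder I] (i : I) : Prop :=
  (Set.Ioi i).Nonempty ∧ IsGLB (Set.Ioi i) i

namespace CatFiltration

variable {I : Type*} [LinearOrder I] {C : Type u} [Category.{v} C] {X : C}

/-- The object `F(i)`, for `i ∈ I`. -/
def obj (F : CatFiltration I C X) (i : I) : C :=
  F.func.obj (OrderDual.toDual (i : WithBot I))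

/-- The structural monomorphism `F(u_{ij}) : F(i) ⟶ F(j)`, for `j ≤ i` in `I`. -/
def map (F : CatFiltration I C X) {i j : I} (h : j ≤ i) : F.obj i ⟶ F.obj j :=
  F.func.map (homOfLE (OrderDual.toDual_le_toDual.mpr (WithBot.coe_le_coe.mpr h)))

/-- `F` is left locally constant at `i` if `I` is not left dense at `i` or there is
`j < i` with `F(u_{ij})` an isomorphism. -/
def LeftLocallyConstantAt (F : CatFiltration I C X) (i : I) : Prop :=
  ¬ LeftDenseAt I i ∨ ∃ (j : I) (h : j < i), IsIso (F.map h.le)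

/-- `F` is right locally constant at `i` if `I` is not right dense at `i` or there
is `j > i` with `F(u_{ji})` an isomorphism. -/
def RightLocallyConstantAt (F : CatFiltration I C X) (i : I) : Prop :=
  ¬ RightDenseAt I i ∨ ∃ (j : I) (h : i < j), IsIso (F.map h.le)

/-- `I₀` is a jumping set of `F`: for all `i > j` in `I` with `[j,i] ∩ I₀ = ∅`, the
morphism `F(u_{ij})` is an isomorphism.  `F` is of finite length if it admits a
(finite) jumping set. -/
def IsJumpingSet (F : CatFiltration I C X) (I₀ : Finset I) : Prop :=
  ∀ ⦃i j : I⦄ (h : j < i), (∀ k ∈ I₀, ¬ (j ≤ k ∧ k ≤ i)) → IsIso (F.map h.le)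

/-- `F` is of finite length if it admits a finite jumping set. -/
def FiniteLength (F : CatFiltration I C X) : Prop :=
  ∃ I₀ : Finset I, F.IsJumpingSet I₀

end CatFiltration

namespace CatFiltration

variable {I : Type*} [LinearOrder I] {C : Type u} [Category.{v} C] {X : C}

/-- The restriction of `F` to the full subcategory `I_{<i}` of `I*`. -/
def ltDiagram (F : CatFiltration I C X) (i : I) : (↥(Set.Iio i))ᵒᵈ ⥤ C :=
  (Monotone.functor
      (f := fun j : (↥(Set.Iio i))ᵒᵈ =>
        (OrderDual.toDual (((OrderDual.ofDual j : ↥(Set.Iio i)) : I) : WithBot I) :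
          IStar I))
      (by
        intro a b hab
        exact OrderDual.toDual_le_toDual.mpr
          (WithBot.coe_le_coe.mpr (Subtype.coe_le_coe.mpr (OrderDual.ofDual_le_ofDual.mpr hab)))))
    ⋙ F.func

/-- The cone over `F|_{I_{<i}}` with apex `F(i)`, whose legs are the structural
morphisms `F(u_{ij}) : F(i) ⟶ F(j)` for `j < i`. -/
def ltCone (F : CatFiltration I C X) (i : I) : Cone (F.ltDiagram i) where
  pt := F.obj i
  π :=
    { app := fun j => F.map (OrderDual.ofDual j).2.le
      naturality := by
        intro a b f
        show 𝟙 _ ≫ F.func.map _ = F.func.map _ ≫ F.func.map _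
        rw [Category.id_comp]
        refine Eq.trans ?_ (F.func.map_comp _ _)
        exact congrArg F.func.map (Subsingleton.elim _ _) }

/-- The restriction of `F` to the full subcategory `I_{>i}` of `I*`. -/
def gtDiagram (F : CatFiltration I C X) (i : I) : (↥(Set.Ioi i))ᵒᵈ ⥤ C :=
  (Monotone.functor
      (f := fun j : (↥(Set.Ioi i))ᵒᵈ =>
        (OrderDual.toDual (((OrderDual.ofDual j : ↥(Set.Ioi i)) : I) : WithBot I) :
          IStar I))
      (by
        intro a b hab
        exact OrderDual.toDual_le_toDual.mpr
          (WithBot.coe_le_coe.mpr (Subtype.coe_le_coe.mpr (OrderDual.ofDual_le_ofDual.mpr hab)))))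
    ⋙ F.func

/-- The cocone under `F|_{I_{>i}}` with apex `F(i)`, whose legs are the structural
morphisms `F(u_{ji}) : F(j) ⟶ F(i)` for `j > i`. -/
def gtCocone (F : CatFiltration I C X) (i : I) : Cocone (F.gtDiagram i) where
  pt := F.obj i
  ι :=
    { app := fun j => F.map (OrderDual.ofDual j).2.le
      naturality := by
        intro a b f
        show F.func.map _ ≫ F.func.map _ = F.func.map _ ≫ 𝟙 _
        rw [Category.comp_id]
        refine Eq.trans (F.func.map_comp _ _).symm ?_
        exact congrArg F.func.map (Subsingleton.elim _ _) }

/-- `F` is left continuous at `i` if `I` is not left dense at `i`, or the limit of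
`F|_{I_{<i}}` exists and the canonical morphism `F(i) → lim F|_{I_{<i}}` is an
isomorphism; equivalently, the canonical cone with apex `F(i)` is a limit cone. -/
def LeftContinuousAt (F : CatFiltration I C X) (i : I) : Prop :=
  ¬ LeftDenseAt I i ∨ Nonempty (IsLimit (F.ltCone i))

/-- `F` is right continuous at `i` if `I` is not right dense at `i`, or the colimit
of `F|_{I_{>i}}` exists and the canonical morphism `colim F|_{I_{>i}} → F(i)` is an
isomorphism; equivalently, the canonical cocone with apex `F(i)` is a colimit
cocone. -/
def RightContinuousAt (F : CatFiltration I C X) (i : I) : Prop :=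
  ¬ RightDenseAt I i ∨ Nonempty (IsColimit (F.gtCocone i))

end CatFiltration

namespace CatFiltration

variable {I : Type*} [LinearOrder I] {C : Type u} [Category.{v} C] {X : C}

instance mapMono (F : CatFiltration I C X) {i j : I} (h : j ≤ i) : Mono (F.map h) :=
  F.mono_map _

lemma map_self (F : CatFiltration I C X) {i : I} (h : i ≤ i) :
    F.map h = 𝟙 (F.obj i) := by
  dsimp [map]
  exact F.func.map_id _

lemma map_comp (F : CatFiltration I C X) {i j k : I} (h1 : k ≤ j) (h2 : j ≤ i) :
    F.map h2 ≫ F.map h1 = F.map (h1.trans h2) := by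
  dsimp [map]
  refine (F.func.map_comp _ _).symm.trans ?_
  exact congrArg F.func.map (Subsingleton.elim _ _)

lemma isIso_map_pair (F : CatFiltration I C X) {j k i : I} (h1 : j ≤ k) (h2 : k ≤ i)
    (H : IsIso (F.map (h1.trans h2))) : IsIso (F.map h2) ∧ IsIso (F.map h1) := by
  have hcomp : F.map h2 ≫ F.map h1 = F.map (h1.trans h2) := F.map_comp h1 h2
  have h2iso : IsIso (F.map h2) := by
    refine ⟨F.map h1 ≫ inv (F.map (h1.trans h2)), ?_, ?_⟩
    · rw [← Category.assoc, hcomp, IsIso.hom_inv_id]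
    · rw [← cancel_mono (F.map h1)]
      simp only [Category.assoc, hcomp, Category.id_comp, IsIso.inv_hom_id, Category.comp_id]
  refine ⟨h2iso, ?_⟩
  have : F.map h1 = inv (F.map h2) ≫ F.map (h1.trans h2) := by
    rw [← hcomp, IsIso.inv_hom_id_assoc]
  rw [this]
  infer_instance

lemma ltDiagram_map (F : CatFiltration I C X) {i : I} {a b : (↥(Set.Iio i))ᵒᵈ} (f : a ⟶ b)
    (h : ((OrderDual.ofDual b : Set.Iio i) : I) ≤ ((OrderDual.ofDual a : Set.Iio i) : I)) :
    (F.ltDiagram i).map f = F.map h := rfl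

lemma ltCone_app (F : CatFiltration I C X) {i : I} (k : (↥(Set.Iio i))ᵒᵈ)
    (h : ((OrderDual.ofDual k : Set.Iio i) : I) ≤ i) :
    (F.ltCone i).π.app k = F.map h := rfl

lemma gtDiagram_map (F : CatFiltration I C X) {i : I} {a b : (↥(Set.Ioi i))ᵒᵈ} (f : a ⟶ b)
    (h : ((OrderDual.ofDual b : Set.Ioi i) : I) ≤ ((OrderDual.ofDual a : Set.Ioi i) : I)) :
    (F.gtDiagram i).map f = F.map h := rfl

lemma gtCocone_app (F : CatFiltration I C X) {i : I} (k : (↥(Set.Ioi i))ᵒᵈ)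
    (h : i ≤ ((OrderDual.ofDual k : Set.Ioi i) : I)) :
    (F.gtCocone i).ι.app k = F.map h := rfl

end CatFiltration
namespace CatFiltration

variable {I : Type*} [LinearOrder I] {C : Type u} [Category.{v} C] {X : C}

/-- If some `F(u_{ij})`, `j < i`, is an isomorphism, the canonical cone at `i`
is a limit cone. -/
noncomputable def isLimitLtConeOfIsIso (F : CatFiltration I C X) {i j : I} (hj : j < i)
    (hiso : IsIso (F.map hj.le)) : IsLimit (F.ltCone i) := by
  exact
  { lift := fun s => s.π.app (OrderDual.toDual ⟨j, hj⟩) ≫ (inv (F.map hj.le) : F.obj j ⟶ F.obj i)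
    fac := fun s k => by
      set jd : (↥(Set.Iio i))ᵒᵈ := OrderDual.toDual ⟨j, hj⟩ with hjd
      set k' : Set.Iio i := OrderDual.ofDual k with hk'
      rcases le_or_gt (k' : I) j with hc | hc
      · have f : jd ⟶ k := homOfLE (show jd ≤ k from hc)
        have hnat : s.π.app jd ≫ F.map hc = s.π.app k := by
          have := (s.π.naturality f).symm
          exact this.trans (Category.id_comp _)
        erw [F.ltCone_app k k'.2.le, Category.assoc,
          show inv (F.map hj.le) ≫ F.map k'.2.le = F.map hc by
            rw [IsIso.inv_comp_eq]
            rw [F.map_comp hc hj.le],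
          hnat]
      · have f : k ⟶ jd := homOfLE (show k ≤ jd from hc.le)
        have hnat : s.π.app k ≫ F.map hc.le = s.π.app jd := by
          have := (s.π.naturality f).symm
          exact this.trans (Category.id_comp _)
        have e1 : F.map k'.2.le ≫ F.map hc.le = F.map hj.le := by
          rw [F.map_comp hc.le k'.2.le]
        erw [← cancel_mono (F.map hc.le), F.ltCone_app k k'.2.le, hnat,
          Category.assoc, Category.assoc, e1, IsIso.inv_hom_id, Category.comp_id]
    uniq := fun s m hm => by
      have h1 := hm (OrderDual.toDual ⟨j, hj⟩)
      rw [F.ltCone_app (OrderDual.toDual ⟨j, hj⟩) hj.le] at h1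
      erw [← h1, Category.assoc, IsIso.hom_inv_id, Category.comp_id] }

/-- If some `F(u_{ji})`, `j > i`, is an isomorphism, the canonical cocone at `i`
is a colimit cocone. -/
noncomputable def isColimitGtCoconeOfIsIso (F : CatFiltration I C X) {i j : I} (hj : i < j)
    (hiso : IsIso (F.map hj.le)) : IsColimit (F.gtCocone i) := by
  exact
  { desc := fun s => (inv (F.map hj.le) : F.obj i ⟶ F.obj j) ≫ s.ι.app (OrderDual.toDual ⟨j, hj⟩)
    fac := fun s k => by
      set jd : (↥(Set.Ioi i))ᵒᵈ := OrderDual.toDual ⟨j, hj⟩ with hjd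
      set k' : Set.Ioi i := OrderDual.ofDual k with hk'
      rcases le_or_gt (k' : I) j with hc | hc
      · -- i < k' ≤ j
        have hiso2 : IsIso (F.map hc) ∧ IsIso (F.map k'.2.le) :=
          F.isIso_map_pair k'.2.le hc hiso
        haveI := hiso2.1
        have f : jd ⟶ k := homOfLE (show jd ≤ k from hc)
        have hnat : F.map hc ≫ s.ι.app k = s.ι.app jd := by
          have := s.ι.naturality f
          exact this.trans (Category.comp_id _)
        have e1 : F.map hc ≫ F.map k'.2.le = F.map hj.le := F.map_comp k'.2.le hc
        erw [F.gtCocone_app k k'.2.le, ← cancel_epi (F.map hc), hnat]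
        erw [← Category.assoc, e1, ← Category.assoc]
        erw [IsIso.hom_inv_id, Category.id_comp]
      · -- j < k'
        have f : k ⟶ jd := homOfLE (show k ≤ jd from hc.le)
        have hnat : F.map hc.le ≫ s.ι.app jd = s.ι.app k := by
          have := s.ι.naturality f
          exact this.trans (Category.comp_id _)
        have e1 : F.map k'.2.le ≫ inv (F.map hj.le) = F.map hc.le := by
          rw [IsIso.comp_inv_eq, F.map_comp hj.le hc.le]
        erw [F.gtCocone_app k k'.2.le, ← Category.assoc, e1, hnat]
    uniq := fun s m hm => by
      have h1 := hm (OrderDual.toDual ⟨j, hj⟩)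
      rw [F.gtCocone_app (OrderDual.toDual ⟨j, hj⟩) hj.le] at h1
      erw [← h1, ← Category.assoc, IsIso.inv_hom_id, Category.id_comp] }

end CatFiltration
namespace CatFiltration

variable {I : Type*} [LinearOrder I] {C : Type u} [Category.{v} C] {X : C}

/-- Auxiliary cone with apex `F(l)` over `F|_{I_{<i}}`, when all maps
`F(k) → F(l)` for `l ≤ k < i` are isomorphisms. -/
noncomputable def auxConeLt (F : CatFiltration I C X) {i l : I} (hl : l < i)
    (hiso : ∀ (k : I) (h1 : l ≤ k), k < i → IsIso (F.map h1)) :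
    Cone (F.ltDiagram i) where
  pt := F.obj l
  π :=
    { app := fun k =>
        if h : ((OrderDual.ofDual k : Set.Iio i) : I) ≤ l then F.map h
        else
          letI := hiso _ (le_of_not_ge h) (OrderDual.ofDual k).2
          (inv (F.map (le_of_not_ge h)) : F.obj l ⟶ F.obj _)
      naturality := by
        intro a b f
        rw [show ((Functor.const _).obj (F.obj l)).map f = 𝟙 _ from rfl, Category.id_comp]
        set a' : Set.Iio i := OrderDual.ofDual a with ha'
        set b' : Set.Iio i := OrderDual.ofDual b with hb'
        have hba : (b' : I) ≤ (a' : I) := Subtype.coe_le_coe.mpr (leOfHom f)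
        rw [F.ltDiagram_map f hba]
        by_cases hal : (a' : I) ≤ l
        · have hbl : (b' : I) ≤ l := hba.trans hal
          erw [dif_pos hal, dif_pos hbl, F.map_comp hba hal]
        · haveI := hiso _ (le_of_not_ge hal) a'.2
          by_cases hbl : (b' : I) ≤ l
          · erw [dif_pos hbl, dif_neg hal, IsIso.eq_inv_comp, F.map_comp hbl (le_of_not_ge hal)]
          · haveI := hiso _ (le_of_not_ge hbl) b'.2
            erw [dif_neg hal, dif_neg hbl, IsIso.eq_inv_comp, IsIso.comp_inv_eq,
              F.map_comp (le_of_not_ge hbl) hba] }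

lemma isIso_map_of_isLimit (F : CatFiltration I C X) {i l : I} (hl : l < i)
    (hiso : ∀ (k : I) (h1 : l ≤ k), k < i → IsIso (F.map h1))
    (hlim : IsLimit (F.ltCone i)) : IsIso (F.map hl.le) := by
  refine ⟨hlim.lift (F.auxConeLt hl hiso), ?_, ?_⟩
  · apply hlim.hom_ext
    intro k
    erw [Category.assoc, hlim.fac, Category.id_comp]
    set k' : Set.Iio i := OrderDual.ofDual k with hk'
    rw [F.ltCone_app k k'.2.le]
    show F.map hl.le ≫ (F.auxConeLt hl hiso).π.app k = F.map k'.2.le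
    by_cases hkl : (k' : I) ≤ l
    · erw [show (F.auxConeLt hl hiso).π.app k = F.map hkl from dif_pos hkl,
        F.map_comp hkl hl.le]
    · haveI := hiso _ (le_of_not_ge hkl) k'.2
      rw [show (F.auxConeLt hl hiso).π.app k =
          letI := hiso _ (le_of_not_ge hkl) k'.2
          (inv (F.map (le_of_not_ge hkl)) : F.obj l ⟶ F.obj _) from dif_neg hkl]
      erw [IsIso.comp_inv_eq, F.map_comp (le_of_not_ge hkl) k'.2.le]
  · have h1 := hlim.fac (F.auxConeLt hl hiso) (OrderDual.toDual ⟨l, hl⟩)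
    rw [F.ltCone_app (OrderDual.toDual ⟨l, hl⟩) hl.le] at h1
    erw [h1]
    show (if h : l ≤ l then F.map h else _) = 𝟙 (F.obj l)
    erw [dif_pos (le_refl l), F.map_self]

/-- Auxiliary cocone with apex `F(l)` under `F|_{I_{>i}}`, when all maps
`F(l) → F(k)` for `i < k ≤ l` are isomorphisms. -/
noncomputable def auxCoconeGt (F : CatFiltration I C X) {i l : I} (hl : i < l)
    (hiso : ∀ (k : I) (h1 : k ≤ l), i < k → IsIso (F.map h1)) :
    Cocone (F.gtDiagram i) where
  pt := F.obj l
  ι :=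
    { app := fun k =>
        if h : l ≤ ((OrderDual.ofDual k : Set.Ioi i) : I) then F.map h
        else
          letI := hiso _ (le_of_not_ge h) (OrderDual.ofDual k).2
          (inv (F.map (le_of_not_ge h)) : F.obj _ ⟶ F.obj l)
      naturality := by
        intro a b f
        rw [show ((Functor.const _).obj (F.obj l)).map f = 𝟙 _ from rfl, Category.comp_id]
        set a' : Set.Ioi i := OrderDual.ofDual a with ha'
        set b' : Set.Ioi i := OrderDual.ofDual b with hb'
        have hba : (b' : I) ≤ (a' : I) := Subtype.coe_le_coe.mpr (leOfHom f)
        rw [F.gtDiagram_map f hba]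
        by_cases hbl : l ≤ (b' : I)
        · have hal : l ≤ (a' : I) := hbl.trans hba
          erw [dif_pos hal, dif_pos hbl, F.map_comp hbl hba]
        · haveI := hiso _ (le_of_not_ge hbl) b'.2
          by_cases hal : l ≤ (a' : I)
          · erw [dif_pos hal, dif_neg hbl, IsIso.comp_inv_eq, F.map_comp (le_of_not_ge hbl) hal]
          · haveI := hiso _ (le_of_not_ge hal) a'.2
            erw [dif_neg hal, dif_neg hbl, IsIso.comp_inv_eq, IsIso.eq_inv_comp,
              F.map_comp hba (le_of_not_ge hal)] }

lemma isIso_map_of_isColimit (F : CatFiltration I C X) {i l : I} (hl : i < l)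
    (hiso : ∀ (k : I) (h1 : k ≤ l), i < k → IsIso (F.map h1))
    (hcolim : IsColimit (F.gtCocone i)) : IsIso (F.map hl.le) := by
  refine ⟨hcolim.desc (F.auxCoconeGt hl hiso), ?_, ?_⟩
  · have h1 := hcolim.fac (F.auxCoconeGt hl hiso) (OrderDual.toDual ⟨l, hl⟩)
    rw [F.gtCocone_app (OrderDual.toDual ⟨l, hl⟩) hl.le] at h1
    erw [h1]
    show (if h : l ≤ l then F.map h else _) = 𝟙 (F.obj l)
    erw [dif_pos (le_refl l), F.map_self]
  · apply hcolim.hom_ext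
    intro k
    erw [← Category.assoc, hcolim.fac, show (F.gtCocone i).ι.app k ≫ 𝟙 (F.obj i) = (F.gtCocone i).ι.app k from Category.comp_id _]
    set k' : Set.Ioi i := OrderDual.ofDual k with hk'
    rw [F.gtCocone_app k k'.2.le]
    show (F.auxCoconeGt hl hiso).ι.app k ≫ F.map hl.le = F.map k'.2.le
    by_cases hlk : l ≤ (k' : I)
    · erw [show (F.auxCoconeGt hl hiso).ι.app k = F.map hlk from dif_pos hlk,
        F.map_comp hl.le hlk]
    · haveI := hiso _ (le_of_not_ge hlk) k'.2
      rw [show (F.auxCoconeGt hl hiso).ι.app k =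
          letI := hiso _ (le_of_not_ge hlk) k'.2
          (inv (F.map (le_of_not_ge hlk)) : F.obj _ ⟶ F.obj l) from dif_neg hlk]
      erw [IsIso.inv_comp_eq, F.map_comp k'.2.le (le_of_not_ge hlk)]

end CatFiltration
open CatFiltration in
/-- If an `I`-filtration `F` is left (resp. right) locally
constant then it is left (resp. right) continuous; the converse holds when `F` is
of finite length. -/
theorem stmt5 {I : Type*} [LinearOrder I] [Nonempty I]
    {C : Type u} [Category.{v} C] {X : C} (F : CatFiltration I C X) :
    ((∀ i : I, F.LeftLocallyConstantAt i) → ∀ i : I, F.LeftContinuousAt i) ∧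
    ((∀ i : I, F.RightLocallyConstantAt i) → ∀ i : I, F.RightContinuousAt i) ∧
    (F.FiniteLength →
      (∀ i : I, F.LeftContinuousAt i) → ∀ i : I, F.LeftLocallyConstantAt i) ∧
    (F.FiniteLength →
      (∀ i : I, F.RightContinuousAt i) → ∀ i : I, F.RightLocallyConstantAt i) := by
  refine ⟨?_, ?_, ?_, ?_⟩
  · intro hloc i
    rcases hloc i with h | ⟨j, hj, hiso⟩
    · exact Or.inl h
    · exact Or.inr ⟨F.isLimitLtConeOfIsIso hj hiso⟩
  · intro hloc i
    rcases hloc i with h | ⟨j, hj, hiso⟩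
    · exact Or.inl h
    · exact Or.inr ⟨F.isColimitGtCoconeOfIsIso hj hiso⟩
  · rintro ⟨I₀, hI₀⟩ hcont i
    by_cases hd : LeftDenseAt I i
    · obtain ⟨l, hl, hno⟩ : ∃ l, l < i ∧ ∀ m ∈ I₀, m < i → m < l := by
        by_cases hS : (I₀.filter (· < i)).Nonempty
        · have hj₀i : (I₀.filter (· < i)).max' hS < i :=
            (Finset.mem_filter.mp ((I₀.filter (· < i)).max'_mem hS)).2
          have hnub : (I₀.filter (· < i)).max' hS ∉ upperBounds (Set.Iio i) := fun hub =>
            absurd (hd.2.2 hub) (not_le.mpr hj₀i)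
          obtain ⟨l, hli, hlj⟩ :
              ∃ l, l ∈ Set.Iio i ∧ ¬ l ≤ (I₀.filter (· < i)).max' hS := by
            by_contra hc
            push_neg at hc
            exact hnub fun a ha => hc a ha
          exact ⟨l, hli, fun m hm hmi =>
            lt_of_le_of_lt
              (Finset.le_max' (I₀.filter (· < i)) m (Finset.mem_filter.mpr ⟨hm, hmi⟩))
              (not_le.mp hlj)⟩
        · obtain ⟨l, hli⟩ := hd.1
          exact ⟨l, hli, fun m hm hmi =>
            absurd ⟨m, Finset.mem_filter.mpr ⟨hm, hmi⟩⟩ hS⟩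
      have hiso : ∀ (k : I) (h1 : l ≤ k), k < i → IsIso (F.map h1) := by
        intro k h1 h2
        rcases h1.lt_or_eq with hlt | heq
        · exact hI₀ hlt fun m hm hc =>
            absurd hc.1 (not_le.mpr (hno m hm (lt_of_le_of_lt hc.2 h2)))
        · subst heq
          rw [F.map_self h1]
          infer_instance
      rcases hcont i with h | ⟨hlim⟩
      · exact absurd hd h
      · exact Or.inr ⟨l, hl, F.isIso_map_of_isLimit hl hiso hlim.some⟩
    · exact Or.inl hd
  · rintro ⟨I₀, hI₀⟩ hcont i
    by_cases hd : RightDenseAt I i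
    · obtain ⟨l, hl, hno⟩ : ∃ l, i < l ∧ ∀ m ∈ I₀, i < m → l < m := by
        by_cases hS : (I₀.filter (i < ·)).Nonempty
        · have hj₀i : i < (I₀.filter (i < ·)).min' hS :=
            (Finset.mem_filter.mp ((I₀.filter (i < ·)).min'_mem hS)).2
          have hnlb : (I₀.filter (i < ·)).min' hS ∉ lowerBounds (Set.Ioi i) := fun hlb =>
            absurd (hd.2.2 hlb) (not_le.mpr hj₀i)
          obtain ⟨l, hli, hlj⟩ :
              ∃ l, l ∈ Set.Ioi i ∧ ¬ (I₀.filter (i < ·)).min' hS ≤ l := by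
            by_contra hc
            push_neg at hc
            exact hnlb fun a ha => hc a ha
          exact ⟨l, hli, fun m hm hmi =>
            lt_of_lt_of_le (not_le.mp hlj)
              (Finset.min'_le (I₀.filter (i < ·)) m (Finset.mem_filter.mpr ⟨hm, hmi⟩))⟩
        · obtain ⟨l, hli⟩ := hd.1
          exact ⟨l, hli, fun m hm hmi =>
            absurd ⟨m, Finset.mem_filter.mpr ⟨hm, hmi⟩⟩ hS⟩
      have hiso : ∀ (k : I) (h1 : k ≤ l), i < k → IsIso (F.map h1) := by
        intro k h1 h2
        rcases h1.lt_or_eq with hlt | heq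
        · exact hI₀ hlt fun m hm hc =>
            absurd hc.2 (not_le.mpr (hno m hm (lt_of_lt_of_le h2 hc.1)))
        · subst heq
          rw [F.map_self h1]
          infer_instance
      rcases hcont i with h | ⟨hcolim⟩
      · exact absurd hd h
      · exact Or.inr ⟨l, hl, F.isIso_map_of_isColimit hl hiso hcolim.some⟩
    · exact Or.inl hd
end

section
/- Let C be a category, I a nonempty totally ordered set, and F an I-filtration of finite length of an object X of C with jumping set I₀. Suppose that F^l is well defined, i.e., for every i ∈ I at which I is left dense the limit lim_{k<i} F(k) exists. Then F^l is of finite length and I₀ is a jumping set of F^l. -/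
open CategoryTheory CategoryTheory.Limits

universe v u

/-- An `I`-filtration of an object `X` of `C`, modelled by its subobjects: an
antitone family `(F(i))_{i ∈ I}` of subobjects of `X` (the value at `−∞` being `X`
itself); the structural morphisms `F(u_{ij}) : F(i) → F(j)` (`j ≤ i`) are the
inclusions of subobjects, and `F(u_{ij})` is an isomorphism exactly when
`F(i) = F(j)` as subobjects. -/
structure SubFiltration (I : Type*) [LinearOrder I]
    {C : Type u} [Category.{v} C] (X : C) where
  obj : I → Subobject X
  antitone : Antitone obj

/-- `I₀` is a jumping set of the family `G` of subobjects of `X`: for all `i > j`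
in `I` with `[j,i] ∩ I₀ = ∅`, the structural morphism `G(i) → G(j)` is an
isomorphism, i.e. `G i = G j` as subobjects. -/
def IsJumpingSetFun {I : Type*} [LinearOrder I] {C : Type u} [Category.{v} C]
    {X : C} (G : I → Subobject X) (I₀ : Finset I) : Prop :=
  ∀ i j : I, j < i → (∀ k ∈ I₀, ¬ (j ≤ k ∧ k ≤ i)) → G i = G j

namespace SubFiltration

variable {I : Type*} [LinearOrder I] {C : Type u} [Category.{v} C] {X : C}

open Classical in
/-- The left continuous filtration `F^l` associated to `F`:
`F^l(i) = lim_{k<i} F(k)` (the greatest lower bound of `(F(k))_{k<i}` among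
subobjects of `X`) if `I` is left dense at `i`, and `F^l(i) = F(i)` otherwise.
It is well defined as soon as these limits exist. -/
noncomputable def lClosure (F : SubFiltration I X)
    (hW : ∀ i : I, LeftDenseAt I i → ∃ m, IsGLB (F.obj '' Set.Iio i) m) :
    I → Subobject X :=
  fun i => if hd : LeftDenseAt I i then (hW i hd).choose else F.obj i

end SubFiltration

/-- **Statement 6.** Let `F` be an `I`-filtration of finite length of `X` with
jumping set `I₀`, and suppose that `F^l` is well defined, i.e. for every `i ∈ I` at
which `I` is left dense the limit `lim_{k<i} F(k)` exists.  Then `F^l` is of finite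
length, and `I₀` is a jumping set of `F^l`. -/
theorem stmt6 {I : Type*} [LinearOrder I] [Nonempty I]
    {C : Type u} [Category.{v} C] {X : C}
    (F : SubFiltration I X) (I₀ : Finset I) (hI₀ : IsJumpingSetFun F.obj I₀)
    (hW : ∀ i : I, LeftDenseAt I i → ∃ m, IsGLB (F.obj '' Set.Iio i) m) :
    IsJumpingSetFun (F.lClosure hW) I₀ := by
  intro i j hji hk
  have hFij : F.obj i = F.obj j := hI₀ i j hji hk
  -- `F^l i = F i`
  have hi : F.lClosure hW i = F.obj i := by
    unfold SubFiltration.lClosure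
    split_ifs with hd
    · refine (hW i hd).choose_spec.unique ⟨?_, ?_⟩
      · rintro _ ⟨k, hk', rfl⟩
        exact F.antitone hk'.le
      · intro b hb
        have hbj : b ≤ F.obj j := hb ⟨j, hji, rfl⟩
        rwa [hFij]
    · rfl
  -- `F^l j = F j`
  have hj : F.lClosure hW j = F.obj j := by
    unfold SubFiltration.lClosure
    split_ifs with hd
    · -- find `k < j` with no jumping point in `[k, j]`
      obtain ⟨k, hkj, hkc⟩ : ∃ k < j, ∀ c ∈ I₀, ¬ (k ≤ c ∧ c ≤ j) := by
        have hjI₀ : ∀ c ∈ I₀, c ≤ j → c < j := by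
          intro c hc hcj
          rcases lt_or_eq_of_le hcj with h | rfl
          · exact h
          · exact absurd ⟨le_refl c, hji.le⟩ (hk c hc)
        by_cases hS : (I₀.filter (· < j)).Nonempty
        · obtain ⟨c₀, hc₀mem, hc₀max⟩ : ∃ c₀ ∈ I₀.filter (· < j),
              ∀ c ∈ I₀.filter (· < j), c ≤ c₀ :=
            ⟨(I₀.filter (· < j)).max' hS, (I₀.filter (· < j)).max'_mem hS,
              fun c hc => Finset.le_max' _ c hc⟩
          have hc₀j : c₀ < j := (Finset.mem_filter.mp hc₀mem).2
          have : ¬ (j ≤ c₀) := not_le.mpr hc₀j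
          obtain ⟨k, hkj, hck⟩ : ∃ k ∈ Set.Iio j, ¬ k ≤ c₀ := by
            by_contra h
            push_neg at h
            exact this (hd.2.2 h)
          refine ⟨k, hkj, fun c hc ⟨hkc, hcj⟩ => ?_⟩
          have hcj' : c < j := hjI₀ c hc hcj
          have : c ≤ c₀ := hc₀max c (Finset.mem_filter.mpr ⟨hc, hcj'⟩)
          exact hck (hkc.trans this)
        · obtain ⟨k, hkj⟩ := hd.1
          refine ⟨k, hkj, fun c hc ⟨hkc, hcj⟩ => ?_⟩
          exact hS ⟨c, Finset.mem_filter.mpr ⟨hc, hjI₀ c hc hcj⟩⟩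
      have hFkj : F.obj j = F.obj k := hI₀ j k hkj hkc
      refine (hW j hd).choose_spec.unique ⟨?_, ?_⟩
      · rintro _ ⟨l, hl, rfl⟩
        exact F.antitone hl.le
      · intro b hb
        have : b ≤ F.obj k := hb ⟨k, hkj, rfl⟩
        rwa [hFkj]
    · rfl
  rw [hi, hj, hFij]
end

section
/- Let E, F₀, F be finite dimensional complex inner product spaces. Let π: E → F₀ be a surjective ℂ-linear map such that the norm of F₀ is the quotient norm induced by π (for every y ∈ F₀, ‖y‖_{F₀} = inf{‖x‖_E : π x = y}), and let i: F₀ → F be a ℂ-linear isometric embedding. Set φ = i ∘ π and let φ† : F → E be the adjoint of φ. Define on E × F the sesquilinear form ⟨(x,y),(x',y')⟩₀ = ⟨x − φ†y, x' − φ†y'⟩_E + ⟨y,y'⟩_F. Then ⟨·,·⟩₀ is a Hermitian inner product on E × F such that: (a) for all x, x' ∈ E, ⟨(x, φx), (x', φx')⟩₀ = ⟨x, x'⟩_E (so x ↦ (x, φx) is an isometric embedding of E into (E × F, ⟨·,·⟩₀)); and (b) the quotient norm on F induced by the second projection pr₂: (E × F, ⟨·,·⟩₀) → F equals the norm ‖·‖_F.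 -/
open scoped InnerProductSpace ComplexOrder

section Aux

variable {V W : Type*}
  [NormedAddCommGroup V] [InnerProductSpace ℂ V] [FiniteDimensional ℂ V]
  [NormedAddCommGroup W] [InnerProductSpace ℂ W] [FiniteDimensional ℂ W]

lemma aux_re_inner_self (x : V) : (inner ℂ x x : ℂ).re = ‖x‖ ^ 2 := by
  have := inner_self_eq_norm_sq (𝕜 := ℂ) x
  simpa using this

lemma aux_im_inner_self (x : V) : (inner ℂ x x : ℂ).im = 0 :=
  inner_self_im (𝕜 := ℂ) x

/-- A norm-preserving linear map preserves inner ℂ products (polarization). -/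
lemma aux_inner_of_norm (A : V →ₗ[ℂ] W) (h : ∀ v, ‖A v‖ = ‖v‖) (v w : V) :
    (inner ℂ (A v) (A w) : ℂ) = inner ℂ v w := by
  rw [inner_eq_sum_norm_sq_div_four, inner_eq_sum_norm_sq_div_four]
  simp only [← map_add, ← map_sub, ← map_smul, h]

/-- A norm-preserving linear map `A` satisfies `A† ∘ A = id`. -/
lemma aux_adjoint_comp_self (A : V →ₗ[ℂ] W) (h : ∀ v, ‖A v‖ = ‖v‖) (v : V) :
    LinearMap.adjoint A (A v) = v := by
  apply ext_inner_right ℂ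
  intro w
  rw [LinearMap.adjoint_inner_left, aux_inner_of_norm A h]

/-- If the norm on the target is the quotient norm of a surjective map `π`,
then the adjoint of `π` is norm-preserving. -/
lemma aux_adjoint_isometry (π : V →ₗ[ℂ] W) (hπsurj : Function.Surjective π)
    (hπquot : ∀ y : W, ‖y‖ = sInf ((fun x : V => ‖x‖) '' (π ⁻¹' {y}))) (y : W) :
    ‖LinearMap.adjoint π y‖ = ‖y‖ := by
  have hbdd : ∀ z : W, BddBelow ((fun x : V => ‖x‖) '' (π ⁻¹' {z})) := by
    intro z
    exact ⟨0, fun s hs => by rcases hs with ⟨x, -, rfl⟩; positivity⟩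
  -- π is norm-nonincreasing
  have hπle : ∀ x : V, ‖π x‖ ≤ ‖x‖ := by
    intro x
    rw [hπquot (π x)]
    exact csInf_le (hbdd _) ⟨x, rfl, rfl⟩
  -- first inequality : ‖π† y‖ ≤ ‖y‖
  have h1 : ‖LinearMap.adjoint π y‖ ≤ ‖y‖ := by
    by_cases hz : LinearMap.adjoint π y = 0
    · simp [hz]
    have hpos : (0 : ℝ) < ‖LinearMap.adjoint π y‖ := norm_pos_iff.mpr hz
    have hsq : ‖LinearMap.adjoint π y‖ ^ 2
        = (inner ℂ (π (LinearMap.adjoint π y)) y : ℂ).re := by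
      rw [← LinearMap.adjoint_inner_right]
      exact (aux_re_inner_self _).symm
    have hre : (inner ℂ (π (LinearMap.adjoint π y)) y : ℂ).re
        ≤ ‖LinearMap.adjoint π y‖ * ‖y‖ := by
      calc (inner ℂ (π (LinearMap.adjoint π y)) y : ℂ).re
          ≤ ‖(inner ℂ (π (LinearMap.adjoint π y)) y : ℂ)‖ := Complex.re_le_norm _
        _ ≤ ‖π (LinearMap.adjoint π y)‖ * ‖y‖ := norm_inner_le_norm _ _
        _ ≤ ‖LinearMap.adjoint π y‖ * ‖y‖ :=
            mul_le_mul_of_nonneg_right (hπle _) (norm_nonneg _)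
    nlinarith
  -- second inequality : ‖y‖ ≤ ‖π† y‖
  have h2 : ‖y‖ ≤ ‖LinearMap.adjoint π y‖ := by
    by_cases hy : y = 0
    · simp [hy]
    have hypos : (0 : ℝ) < ‖y‖ := norm_pos_iff.mpr hy
    -- for every preimage x of y, ‖y‖² ≤ ‖x‖ * ‖π† y‖
    have key : ∀ x : V, π x = y → ‖y‖ ^ 2 ≤ ‖x‖ * ‖LinearMap.adjoint π y‖ := by
      intro x hx
      have hxy : ‖y‖ ^ 2 = (inner ℂ x (LinearMap.adjoint π y) : ℂ).re := by
        rw [LinearMap.adjoint_inner_right, hx]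
        exact (aux_re_inner_self _).symm
      calc ‖y‖ ^ 2 = (inner ℂ x (LinearMap.adjoint π y) : ℂ).re := hxy
        _ ≤ ‖(inner ℂ x (LinearMap.adjoint π y) : ℂ)‖ := Complex.re_le_norm _
        _ ≤ ‖x‖ * ‖LinearMap.adjoint π y‖ := norm_inner_le_norm _ _
    have hlb : ‖y‖ ^ 2 ≤ ‖y‖ * ‖LinearMap.adjoint π y‖ := by
      by_cases hz : LinearMap.adjoint π y = 0
      · obtain ⟨x, hx⟩ := hπsurj y
        have := key x hx
        rw [hz] at this
        simp at this
        exact absurd this hy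
      have hpos : (0 : ℝ) < ‖LinearMap.adjoint π y‖ := norm_pos_iff.mpr hz
      have hlow : ‖y‖ ^ 2 / ‖LinearMap.adjoint π y‖
          ≤ sInf ((fun x : V => ‖x‖) '' (π ⁻¹' {y})) := by
        apply le_csInf
        · obtain ⟨x, hx⟩ := hπsurj y
          exact ⟨‖x‖, x, hx, rfl⟩
        · rintro s ⟨x, hx, rfl⟩
          rw [div_le_iff₀ hpos]
          exact key x hx
      rw [← hπquot y] at hlow
      calc ‖y‖ ^ 2 = (‖y‖ ^ 2 / ‖LinearMap.adjoint π y‖) * ‖LinearMap.adjoint π y‖ := by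
            field_simp
        _ ≤ ‖y‖ * ‖LinearMap.adjoint π y‖ :=
            mul_le_mul_of_nonneg_right hlow (norm_nonneg _)
    nlinarith
  linarith

/-- The auxiliary inner-product core on `V × W` twisted by a linear map `ψ : W →ₗ V`. -/
noncomputable def auxCore (ψ : W →ₗ[ℂ] V) : InnerProductSpace.Core ℂ (V × W) where
  inner p q := (inner ℂ (p.1 - ψ p.2) (q.1 - ψ q.2) : ℂ) + (inner ℂ p.2 q.2 : ℂ)
  conj_inner_symm p q := by simp only [map_add, inner_conj_symm]
  re_inner_nonneg p := by
    have h1 : (0:ℝ) ≤ ((inner ℂ (p.1 - ψ p.2) (p.1 - ψ p.2) : ℂ)).re := by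
      rw [aux_re_inner_self]; positivity
    have h2 : (0:ℝ) ≤ ((inner ℂ p.2 p.2 : ℂ)).re := by
      rw [aux_re_inner_self]; positivity
    show (0:ℝ) ≤ RCLike.re
        ((inner ℂ (p.1 - ψ p.2) (p.1 - ψ p.2) : ℂ) + (inner ℂ p.2 p.2 : ℂ))
    rw [map_add]
    simp only [RCLike.re_to_complex]
    linarith
  add_left p q r := by
    simp only [Prod.fst_add, Prod.snd_add, map_add, add_sub_add_comm, inner_add_left]
    ring
  smul_left p q r := by
    simp only [Prod.smul_fst, Prod.smul_snd, map_smul, ← smul_sub, inner_smul_left]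
    ring
  definite p hp := by
    have h1 : (0:ℝ) ≤ ((inner ℂ (p.1 - ψ p.2) (p.1 - ψ p.2) : ℂ)).re := by
      rw [aux_re_inner_self]; positivity
    have h2 : (0:ℝ) ≤ ((inner ℂ p.2 p.2 : ℂ)).re := by
      rw [aux_re_inner_self]; positivity
    have hre : ((inner ℂ (p.1 - ψ p.2) (p.1 - ψ p.2) : ℂ)).re
        + ((inner ℂ p.2 p.2 : ℂ)).re = 0 := by
      have := congrArg Complex.re hp
      simpa using this
    have e2 : ((inner ℂ p.2 p.2 : ℂ)).re = 0 := by linarith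
    have e1 : ((inner ℂ (p.1 - ψ p.2) (p.1 - ψ p.2) : ℂ)).re = 0 := by linarith
    have hp2 : p.2 = 0 := by
      rw [← inner_self_eq_zero (𝕜 := ℂ)]
      apply Complex.ext
      · simpa using e2
      · simpa using aux_im_inner_self p.2
    have hp1 : p.1 - ψ p.2 = 0 := by
      rw [← inner_self_eq_zero (𝕜 := ℂ)]
      apply Complex.ext
      · simpa using e1
      · simpa using aux_im_inner_self (p.1 - ψ p.2)
    rw [hp2, map_zero, sub_zero] at hp1
    exact Prod.ext hp1 hp2

lemma auxCore_inner (ψ : W →ₗ[ℂ] V) (p q : V × W) :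
    (auxCore ψ).inner p q
      = (inner ℂ (p.1 - ψ p.2) (q.1 - ψ q.2) : ℂ) + (inner ℂ p.2 q.2 : ℂ) := rfl

end Aux

/-- Let `E`, `F₀`, `F` be finite dimensional complex inner ℂ product
spaces, `π : E → F₀` surjective with the norm of `F₀` the quotient norm induced by
`π`, and `i : F₀ → F` an isometric embedding. Set `φ = i ∘ π` with adjoint `φ†`.
Then the sesquilinear form
`⟨(x,y),(x',y')⟩₀ = ⟨x − φ†y, x' − φ†y'⟩_E + ⟨y,y'⟩_F` is a Hermitian inner ℂ product
on `E × F` such that (a) `x ↦ (x, φ x)` is an isometric embedding of `E` and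
(b) the quotient norm on `F` induced by the second projection equals `‖·‖_F`. -/
theorem stmt8 {E F₀ F : Type*}
    [NormedAddCommGroup E] [InnerProductSpace ℂ E] [FiniteDimensional ℂ E]
    [NormedAddCommGroup F₀] [InnerProductSpace ℂ F₀] [FiniteDimensional ℂ F₀]
    [NormedAddCommGroup F] [InnerProductSpace ℂ F] [FiniteDimensional ℂ F]
    (π : E →ₗ[ℂ] F₀) (hπsurj : Function.Surjective π)
    (hπquot : ∀ y : F₀, ‖y‖ = sInf ((fun x : E => ‖x‖) '' (π ⁻¹' {y})))
    (i : F₀ →ₗ[ℂ] F) (hi : ∀ x : F₀, ‖i x‖ = ‖x‖) :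
    ∃ core : InnerProductSpace.Core ℂ (E × F),
      (∀ p q : E × F,
        core.inner p q =
          (inner ℂ (p.1 - LinearMap.adjoint (i ∘ₗ π) p.2)
                 (q.1 - LinearMap.adjoint (i ∘ₗ π) q.2) : ℂ) +
            (inner ℂ p.2 q.2 : ℂ)) ∧
      (∀ x x' : E,
        core.inner (x, (i ∘ₗ π) x) (x', (i ∘ₗ π) x') = (inner ℂ x x' : ℂ)) ∧
      (∀ y : F,
        sInf ((fun p : E × F => Real.sqrt (core.inner p p).re) ''
          {p : E × F | p.2 = y}) = ‖y‖) := by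
  classical
  set ψ := LinearMap.adjoint (i ∘ₗ π) with hψ
  refine ⟨auxCore ψ, fun p q => rfl, ?_, ?_⟩
  · -- part (a)
    intro x x'
    have hiin : ∀ a b : F₀, (inner ℂ (i a) (i b) : ℂ) = inner ℂ a b :=
      aux_inner_of_norm i hi
    have hπadj : ∀ y : F₀, ‖LinearMap.adjoint π y‖ = ‖y‖ :=
      aux_adjoint_isometry π hπsurj hπquot
    have hπin : ∀ a b : F₀,
        (inner ℂ (LinearMap.adjoint π a) (LinearMap.adjoint π b) : ℂ) = inner ℂ a b :=
      aux_inner_of_norm (LinearMap.adjoint π) hπadj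
    have hii : ∀ a : F₀, LinearMap.adjoint i (i a) = a :=
      aux_adjoint_comp_self i hi
    have hψφ : ∀ z : E, ψ ((i ∘ₗ π) z) = LinearMap.adjoint π (π z) := by
      intro z
      rw [hψ, LinearMap.adjoint_comp]
      simp [hii (π z)]
    rw [auxCore_inner]
    simp only [hψφ]
    have hAA : (inner ℂ ((i ∘ₗ π) x) ((i ∘ₗ π) x') : ℂ) = inner ℂ (π x) (π x') := by
      simp only [LinearMap.comp_apply]; exact hiin _ _
    have h1 : (inner ℂ x (LinearMap.adjoint π (π x')) : ℂ) = inner ℂ (π x) (π x') :=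
      LinearMap.adjoint_inner_right _ _ _
    have h3 : (inner ℂ (LinearMap.adjoint π (π x)) (LinearMap.adjoint π (π x')) : ℂ)
        = inner ℂ (π x) (π x') := hπin _ _
    rw [inner_sub_left, inner_sub_right, inner_sub_right, hAA, h1, h3]
    rw [LinearMap.adjoint_inner_left]
    ring
  · -- part (b)
    intro y
    apply le_antisymm
    · apply csInf_le
      · exact ⟨0, by rintro s ⟨p, -, rfl⟩; positivity⟩
      · refine ⟨(ψ y, y), rfl, ?_⟩
        simp only [auxCore_inner, sub_self, inner_zero_left, zero_add, aux_re_inner_self]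
        exact Real.sqrt_sq (norm_nonneg y)
    · apply le_csInf
      · exact ⟨_, (ψ y, y), rfl, rfl⟩
      · rintro s ⟨p, hp, rfl⟩
        simp only [Set.mem_setOf_eq] at hp
        subst hp
        simp only [auxCore_inner, Complex.add_re, aux_re_inner_self]
        have h1 : (0:ℝ) ≤ ‖p.1 - ψ p.2‖ ^ 2 := by positivity
        calc ‖p.2‖ = Real.sqrt (‖p.2‖ ^ 2) := (Real.sqrt_sq (norm_nonneg _)).symm
          _ ≤ _ := by
              apply Real.sqrt_le_sqrt
              linarith
end

section
/- Let E and F be finite dimensional complex inner product spaces and let φ: E → F be a ℂ-linear map with operator norm ‖φ‖ ≤ 1. Then there exists a Hermitian inner product ⟨·,·⟩₀ on E × F such that: (a) for all x, x' ∈ E, ⟨(x, φx), (x', φx')⟩₀ = ⟨x, x'⟩_E (i.e., x ↦ (x, φx) is an isometric embedding of E into (E × F, ⟨·,·⟩₀)); and (b) the quotient norm on F induced by the second projection pr₂: (E × F, ⟨·,·⟩₀) → F equals the norm ‖·‖_F of F. -/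
set_option maxHeartbeats 2000000

/-- Let `E` and `F` be finite dimensional complex inner ℂ product
spaces and `φ : E → F` a linear map of operator norm `≤ 1`. Then there exists a
Hermitian inner ℂ product `⟨·,·⟩₀` on `E × F` such that (a) `x ↦ (x, φ x)` is an
isometric embedding of `E` into `(E × F, ⟨·,·⟩₀)`, and (b) the quotient norm on `F`
induced by the second projection from `(E × F, ⟨·,·⟩₀)` equals the norm of `F`. -/
theorem stmt9 {E F : Type*}
    [NormedAddCommGroup E] [InnerProductSpace ℂ E] [FiniteDimensional ℂ E]
    [NormedAddCommGroup F] [InnerProductSpace ℂ F] [FiniteDimensional ℂ F]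
    (φ : E →L[ℂ] F) (hφ : ‖φ‖ ≤ 1) :
    ∃ core : InnerProductSpace.Core ℂ (E × F),
      (∀ x x' : E,
        core.inner (x, φ x) (x', φ x') = (inner ℂ x x' : ℂ)) ∧
      (∀ y : F,
        sInf ((fun p : E × F => Real.sqrt (core.inner p p).re) ''
          {p : E × F | p.2 = y}) = ‖y‖) := by
  haveI : CompleteSpace E := FiniteDimensional.complete ℂ E
  haveI : CompleteSpace F := FiniteDimensional.complete ℂ F
  set a : E →L[ℂ] E := ContinuousLinearMap.adjoint φ ∘L φ with ha_def
  have ha_sa : IsSelfAdjoint a := by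
    rw [ContinuousLinearMap.isSelfAdjoint_iff']
    rw [ha_def, ContinuousLinearMap.adjoint_comp, ContinuousLinearMap.adjoint_adjoint]
  have ha_pos : (0 : E →L[ℂ] E) ≤ 1 - a := by
    rw [ContinuousLinearMap.nonneg_iff_isPositive]
    refine ⟨ContinuousLinearMap.isSelfAdjoint_iff_isSymmetric.mp ((IsSelfAdjoint.one (E →L[ℂ] E)).sub ha_sa), fun x => ?_⟩
    have h1 : (1 - a) x = x - ContinuousLinearMap.adjoint φ (φ x) := by
      simp [ha_def]
    rw [ContinuousLinearMap.reApplyInnerSelf, h1, inner_sub_left,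
      ContinuousLinearMap.adjoint_inner_left]
    have h2 : ‖φ x‖ ≤ ‖x‖ := by
      calc ‖φ x‖ ≤ ‖φ‖ * ‖x‖ := φ.le_opNorm x
      _ ≤ 1 * ‖x‖ := by gcongr
      _ = ‖x‖ := one_mul _
    have h3 : RCLike.re (inner ℂ x x : ℂ) = ‖x‖ ^ 2 := inner_self_eq_norm_sq x
    have h4 : RCLike.re (inner ℂ (φ x) (φ x) : ℂ) = ‖φ x‖ ^ 2 := inner_self_eq_norm_sq (φ x)
    rw [map_sub, h3, h4]
    nlinarith [norm_nonneg (φ x), norm_nonneg x]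
  -- an abstract square root of 1 - φ*φ
  obtain ⟨D, hD0, hD2⟩ : ∃ D : E →L[ℂ] E, (0 : E →L[ℂ] E) ≤ D ∧ D ^ 2 = 1 - a :=
    ⟨CFC.sqrt (1 - a), CFC.sqrt_nonneg _, CFC.sq_sqrt _ ha_pos⟩
  have hDpos : D.IsPositive := (ContinuousLinearMap.nonneg_iff_isPositive D).mp hD0
  have hDsym : ∀ u v : E, (inner ℂ (D u) v : ℂ) = inner ℂ u (D v) :=
    (ContinuousLinearMap.isSelfAdjoint_iff_isSymmetric.mp hDpos.isSelfAdjoint)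
  -- auxiliary operators
  set S : E →L[ℂ] E := D - (D - 1) * (1 - D ^ 2) with hS_def
  set V : F →L[ℂ] E := (D - 1) ∘L ContinuousLinearMap.adjoint φ with hV_def
  have ha_eq : a = 1 - D ^ 2 := by rw [hD2]; abel
  -- key graph identity
  have hop : S + (D - 1) * a = D := by rw [ha_eq, hS_def]; abel
  have hSV : ∀ x : E, S x + V (φ x) = D x := by
    intro x
    have h1 : V (φ x) = ((D - 1) * a) x := by
      simp [hV_def, ha_def, ContinuousLinearMap.mul_apply]
    rw [h1, ← ContinuousLinearMap.add_apply, hop]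
  -- positivity decomposition of S
  have hSalt : S = D + (1 - D) * ((1 + D) * (1 - D)) := by rw [hS_def]; noncomm_ring
  have h1Dsym : ∀ u v : E, (inner ℂ ((1 - D) u) v : ℂ) = inner ℂ u ((1 - D) v) := by
    intro u v
    simp only [ContinuousLinearMap.sub_apply, ContinuousLinearMap.one_apply,
      inner_sub_left, inner_sub_right, hDsym]
  have hSre : ∀ x : E, RCLike.re (inner ℂ (S x) x : ℂ) =
      RCLike.re (inner ℂ (D x) x : ℂ) + (‖(1 - D) x‖ ^ 2
        + RCLike.re (inner ℂ (D ((1 - D) x)) ((1 - D) x) : ℂ)) := by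
    intro x
    rw [hSalt]
    rw [ContinuousLinearMap.add_apply, inner_add_left]
    have h2 : ((1 - D) * ((1 + D) * (1 - D))) x = (1 - D) ((1 + D) ((1 - D) x)) := by
      simp [ContinuousLinearMap.mul_apply]
    rw [h2, h1Dsym]
    set u := (1 - D) x with hu
    have h3 : ((1 + D) u : E) = u + D u := by
      simp [ContinuousLinearMap.add_apply]
    rw [h3, inner_add_left, map_add, map_add, inner_self_eq_norm_sq u]
  have hS_inj : Function.Injective S := by
    have hker : ∀ x : E, S x = 0 → x = 0 := by
      intro x hx
      have h0 : RCLike.re (inner ℂ (S x) x : ℂ) = 0 := by rw [hx, inner_zero_left, map_zero]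
      rw [hSre] at h0
      have n1 : 0 ≤ RCLike.re (inner ℂ (D x) x : ℂ) := hDpos.re_inner_nonneg_left x
      have n2 : 0 ≤ RCLike.re (inner ℂ (D ((1 - D) x)) ((1 - D) x) : ℂ) :=
        hDpos.re_inner_nonneg_left _
      have n3 : 0 ≤ ‖(1 - D) x‖ ^ 2 := sq_nonneg _
      have hu0 : ‖(1 - D) x‖ ^ 2 = 0 := by linarith
      have hDx : D x = x := by
        have h5 : (1 - D) x = 0 := by
          rw [← norm_eq_zero]; exact pow_eq_zero_iff (n := 2) (by norm_num) |>.mp hu0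
        have h6 : x - D x = 0 := by
          simpa [ContinuousLinearMap.sub_apply] using h5
        exact (sub_eq_zero.mp h6).symm
      have hDre : RCLike.re (inner ℂ (D x) x : ℂ) = 0 := by linarith
      rw [hDx, inner_self_eq_norm_sq x] at hDre
      simpa [norm_eq_zero] using pow_eq_zero_iff (n := 2) (by norm_num) |>.mp hDre
    intro x y h
    have := hker (x - y) (by rw [map_sub, h, sub_self])
    exact sub_eq_zero.mp this
  have hS_surj : Function.Surjective S :=
    (LinearMap.injective_iff_surjective (f := (S : E →ₗ[ℂ] E))).mp hS_inj
  -- linearity of the embedding component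
  have hre2 : ∀ (w : E) (z : F), ((inner ℂ w w : ℂ) + inner ℂ z z).re = ‖w‖ ^ 2 + ‖z‖ ^ 2 := by
    intro w z
    rw [Complex.add_re, ← RCLike.re_to_complex, ← RCLike.re_to_complex,
      inner_self_eq_norm_sq (𝕜 := ℂ) w, inner_self_eq_norm_sq (𝕜 := ℂ) z]
  refine ⟨{
    inner := fun p q => (inner ℂ (S p.1 + V p.2) (S q.1 + V q.2) : ℂ) + inner ℂ p.2 q.2
    conj_inner_symm := fun p q => by
      simp only [map_add, inner_conj_symm]
    re_inner_nonneg := fun p => by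
      show 0 ≤ RCLike.re ((inner ℂ (S p.1 + V p.2) (S p.1 + V p.2) : ℂ) + inner ℂ p.2 p.2)
      rw [map_add]
      exact add_nonneg inner_self_nonneg inner_self_nonneg
    add_left := fun p q r => by
      show (inner ℂ (S (p + q).1 + V (p + q).2) (S r.1 + V r.2) : ℂ) + inner ℂ (p + q).2 r.2
        = ((inner ℂ (S p.1 + V p.2) (S r.1 + V r.2) : ℂ) + inner ℂ p.2 r.2)
          + ((inner ℂ (S q.1 + V q.2) (S r.1 + V r.2) : ℂ) + inner ℂ q.2 r.2)
      have h7 : S (p + q).1 + V (p + q).2 = (S p.1 + V p.2) + (S q.1 + V q.2) := by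
        rw [Prod.fst_add, Prod.snd_add, map_add, map_add]; abel
      rw [h7, Prod.snd_add]
      simp only [inner_add_left]
      ring
    smul_left := fun p q r => by
      show (inner ℂ (S (r • p).1 + V (r • p).2) (S q.1 + V q.2) : ℂ) + inner ℂ (r • p).2 q.2
        = (starRingEnd ℂ) r * ((inner ℂ (S p.1 + V p.2) (S q.1 + V q.2) : ℂ) + inner ℂ p.2 q.2)
      have h7 : S (r • p).1 + V (r • p).2 = r • (S p.1 + V p.2) := by
        rw [Prod.smul_fst, Prod.smul_snd, map_smul, map_smul, smul_add]
      rw [h7, Prod.smul_snd, inner_smul_left, inner_smul_left]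
      ring
    definite := fun p hp => by
      have h0 : RCLike.re ((inner ℂ (S p.1 + V p.2) (S p.1 + V p.2) : ℂ) + inner ℂ p.2 p.2) = 0 := by
        rw [show (inner ℂ (S p.1 + V p.2) (S p.1 + V p.2) : ℂ) + inner ℂ p.2 p.2 = 0 from hp,
          map_zero]
      rw [map_add, inner_self_eq_norm_sq (S p.1 + V p.2), inner_self_eq_norm_sq p.2] at h0
      have h1 : ‖S p.1 + V p.2‖ ^ 2 = 0 ∧ ‖p.2‖ ^ 2 = 0 :=
        ⟨by nlinarith [sq_nonneg ‖S p.1 + V p.2‖, sq_nonneg ‖p.2‖],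
         by nlinarith [sq_nonneg ‖S p.1 + V p.2‖, sq_nonneg ‖p.2‖]⟩
      have h2 : p.2 = 0 := by
        simpa [norm_eq_zero] using pow_eq_zero_iff (n := 2) (by norm_num) |>.mp h1.2
      have h3 : S p.1 = 0 := by
        have h8 := pow_eq_zero_iff (n := 2) (by norm_num) |>.mp h1.1
        rw [norm_eq_zero] at h8
        simpa [h2] using h8
      have h4 : p.1 = 0 := hS_inj (by simpa using h3)
      exact Prod.ext h4 h2 }, ?_, ?_⟩
  · -- (a)
    intro x x'
    show (inner ℂ (S x + V (φ x)) (S x' + V (φ x')) : ℂ) + inner ℂ (φ x) (φ x') = inner ℂ x x'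
    rw [hSV x, hSV x', hDsym]
    have h5 : D (D x') = (D ^ 2) x' := by simp [pow_two, ContinuousLinearMap.mul_apply]
    rw [h5, hD2]
    have h6 : ((1 - a) x' : E) = x' - ContinuousLinearMap.adjoint φ (φ x') := by
      simp [ha_def]
    rw [h6, inner_sub_right, ContinuousLinearMap.adjoint_inner_right]
    ring
  · -- (b)
    intro y
    obtain ⟨x₀, hx₀⟩ := hS_surj (-(V y))
    show sInf ((fun p : E × F => Real.sqrt
        (((inner ℂ (S p.1 + V p.2) (S p.1 + V p.2) : ℂ) + inner ℂ p.2 p.2).re)) ''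
        {p : E × F | p.2 = y}) = ‖y‖
    have hval : ∀ p : E × F,
        Real.sqrt (((inner ℂ (S p.1 + V p.2) (S p.1 + V p.2) : ℂ) + inner ℂ p.2 p.2).re)
        = Real.sqrt (‖S p.1 + V p.2‖ ^ 2 + ‖p.2‖ ^ 2) := by
      intro p; rw [hre2]
    apply le_antisymm
    · apply csInf_le
      · exact ⟨0, by rintro b ⟨p, hp, rfl⟩; exact Real.sqrt_nonneg _⟩
      · refine ⟨(x₀, y), rfl, ?_⟩
        show Real.sqrt (((inner ℂ (S x₀ + V y) (S x₀ + V y) : ℂ) + inner ℂ y y).re) = ‖y‖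
        have h10 : S x₀ + V y = 0 := by rw [hx₀]; abel
        rw [h10, hre2]
        simp [Real.sqrt_sq (norm_nonneg y)]
    · apply le_csInf
      · exact ⟨_, ⟨(x₀, y), rfl, rfl⟩⟩
      · rintro b ⟨p, hp, rfl⟩
        simp only [hval]
        have hp2 : p.2 = y := hp
        calc ‖y‖ = Real.sqrt (‖y‖ ^ 2) := (Real.sqrt_sq (norm_nonneg y)).symm
          _ ≤ Real.sqrt (‖S p.1 + V p.2‖ ^ 2 + ‖p.2‖ ^ 2) := by
              apply Real.sqrt_le_sqrt
              rw [hp2]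
              nlinarith [sq_nonneg ‖S p.1 + V p.2‖]
end

section
/- Let E and F be finite dimensional complex inner product spaces and let φ: E → F be a ℂ-linear map with operator norm ‖φ‖ ≤ 1, with adjoint φ†: F → E. Let P: E → E be the unique positive self-adjoint square root of 1_E − φ†∘φ and Q: F → F the unique positive self-adjoint square root of 1_F − φ∘φ†. Then φ† ∘ Q = P ∘ φ† and Q ∘ φ = φ ∘ P. -/
set_option synthInstance.maxHeartbeats 1000000
set_option maxHeartbeats 1000000
open scoped NNReal

lemma commute_cfc_complex {A : Type*} [CStarAlgebra A] (a b : A) [ha : IsStarNormal a]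
    (h : Commute b a) (h' : Commute b (star a)) (f : ℂ → ℂ) : Commute b (cfc f a) := by
  have hmem : cfc f a ∈ StarAlgebra.elemental ℂ a := by
    by_cases hf : ContinuousOn f (spectrum ℂ a)
    · rw [cfc_apply f a ha hf, cfcHom_eq_of_isStarNormal]
      exact SetLike.coe_mem _
    · rw [cfc_apply_of_not_continuousOn a hf]; exact zero_mem _
  exact StarAlgebra.elemental.induction_on ℂ hmem (P := fun u _ => Commute b u) h h'
    (fun r => (Algebra.commutes r b).symm)
    (fun u _ v _ cu cv => cu.add_right cv)
    (fun u _ v _ cu cv => cu.mul_right cv)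
    (fun s hs hcomm v hv => closure_minimal (fun u hu => hcomm u hu)
      (isClosed_eq (continuous_mul_left b) (continuous_mul_right b)) hv)

lemma commute_sqrt {A : Type*} [CStarAlgebra A] [PartialOrder A] [StarOrderedRing A]
    (a b : A) (ha : 0 ≤ a) (h : Commute b a) : Commute b (CFC.sqrt a) := by
  have hsa : IsSelfAdjoint a := IsSelfAdjoint.of_nonneg ha
  have : IsStarNormal a := hsa.isStarNormal
  rw [CFC.sqrt_eq_cfc, cfc_nnreal_eq_real _ _ ha, cfc_real_eq_complex _ hsa]
  exact commute_cfc_complex a b h (hsa.star_eq.symm ▸ h) _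

/-- Let `E`, `F` be finite dimensional complex inner product
spaces, `φ : E → F` linear with `‖φ‖ ≤ 1` and adjoint `φ†`. Let `P` be the (unique)
positive self-adjoint square root of `1 − φ†φ` and `Q` the (unique) positive
self-adjoint square root of `1 − φφ†`. Then `φ† ∘ Q = P ∘ φ†` and `Q ∘ φ = φ ∘ P`. -/
theorem stmt10 {E F : Type*}
    [NormedAddCommGroup E] [InnerProductSpace ℂ E] [FiniteDimensional ℂ E]
    [NormedAddCommGroup F] [InnerProductSpace ℂ F] [FiniteDimensional ℂ F]
    (φ : E →L[ℂ] F) (hφ : ‖φ‖ ≤ 1)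
    (P : E →L[ℂ] E) (Q : F →L[ℂ] F)
    (hP : P.IsPositive) (hQ : Q.IsPositive)
    (hP2 : P ∘L P = 1 - ContinuousLinearMap.adjoint φ ∘L φ)
    (hQ2 : Q ∘L Q = 1 - φ ∘L ContinuousLinearMap.adjoint φ) :
    ContinuousLinearMap.adjoint φ ∘L Q = P ∘L ContinuousLinearMap.adjoint φ ∧
      Q ∘L φ = φ ∘L P := by
  classical
  set ψ := ContinuousLinearMap.adjoint φ with hψ
  have hA : ψ ∘L (Q ∘L Q) = (P ∘L P) ∘L ψ := by
    rw [hP2, hQ2]; ext y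
    simp [ContinuousLinearMap.sub_apply, map_sub]
  have hB : (Q ∘L Q) ∘L φ = φ ∘L (P ∘L P) := by
    rw [hP2, hQ2]; ext x
    simp [ContinuousLinearMap.sub_apply, map_sub]
  let G := WithLp 2 (E × F)
  let e : G ≃L[ℂ] E × F := WithLp.prodContinuousLinearEquiv 2 ℂ E F
  let L : (E × F →L[ℂ] E × F) → (G →L[ℂ] G) := fun M =>
    (e.symm : E × F →L[ℂ] G) ∘L (M ∘L (e : G →L[ℂ] E × F))
  let Sg : G →L[ℂ] G := L (P.prodMap Q)
  let Ps : G →L[ℂ] G := L ((ψ ∘L ContinuousLinearMap.snd ℂ E F).prod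
      (φ ∘L ContinuousLinearMap.fst ℂ E F))
  have hSapp : ∀ v : G, Sg v = e.symm (P (e v).1, Q (e v).2) := fun v => rfl
  have hPapp : ∀ v : G, Ps v = e.symm (ψ (e v).2, φ (e v).1) := fun v => rfl
  have heapp : ∀ w : E × F, e (e.symm w) = w := fun w => e.apply_symm_apply w
  have hSpos : Sg.IsPositive := by
    have hPs := ContinuousLinearMap.isSelfAdjoint_iff_isSymmetric.mp hP.isSelfAdjoint
    have hQs := ContinuousLinearMap.isSelfAdjoint_iff_isSymmetric.mp hQ.isSelfAdjoint
    constructor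
    · intro v w
      show (inner ℂ (Sg v) w : ℂ) = inner ℂ v (Sg w)
      rw [hSapp, hSapp]
      rw [show (inner ℂ (e.symm (P (e v).1, Q (e v).2)) w : ℂ)
            = inner ℂ (P (e v).1) (e w).1 + inner ℂ (Q (e v).2) (e w).2 from rfl,
          show (inner ℂ v (e.symm (P (e w).1, Q (e w).2)) : ℂ)
            = inner ℂ (e v).1 (P (e w).1) + inner ℂ (e v).2 (Q (e w).2) from rfl]
      exact congrArg₂ (· + ·) (hPs (e v).1 (e w).1) (hQs (e v).2 (e w).2)
    · intro v
      show 0 ≤ RCLike.re (inner ℂ (Sg v) v : ℂ)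
      rw [hSapp, show (inner ℂ (e.symm (P (e v).1, Q (e v).2)) v : ℂ)
            = inner ℂ (P (e v).1) (e v).1 + inner ℂ (Q (e v).2) (e v).2 from rfl, map_add]
      exact add_nonneg (hP.re_inner_nonneg_left _) (hQ.re_inner_nonneg_left _)
  have hSsq : Sg * Sg = L ((P ∘L P).prodMap (Q ∘L Q)) := by
    ext v
    show Sg (Sg v) = _
    rw [hSapp, hSapp, heapp]
    rfl
  have hcomm : Commute Ps (Sg * Sg) := by
    rw [hSsq]
    ext v
    have h1 : ψ ((Q ∘L Q) (e v).2) = (P ∘L P) (ψ (e v).2) :=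
      ContinuousLinearMap.ext_iff.mp hA (e v).2
    have h2 : (Q ∘L Q) (φ (e v).1) = φ ((P ∘L P) (e v).1) :=
      ContinuousLinearMap.ext_iff.mp hB (e v).1
    show e.symm (ψ ((Q ∘L Q) (e v).2), φ ((P ∘L P) (e v).1))
        = e.symm ((P ∘L P) (ψ (e v).2), (Q ∘L Q) (φ (e v).1))
    exact congrArg e.symm (Prod.ext h1 h2.symm)
  have hS0 : 0 ≤ Sg := (ContinuousLinearMap.nonneg_iff_isPositive Sg).mpr hSpos
  have hsq0 : 0 ≤ Sg * Sg := by
    calc (0 : G →L[ℂ] G) ≤ star Sg * Sg := star_mul_self_nonneg Sg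
    _ = Sg * Sg := by rw [hSpos.isSelfAdjoint.star_eq]
  have hsqrt : CFC.sqrt (Sg * Sg) = Sg := CFC.sqrt_unique rfl
  have hcommS : Commute Ps Sg := hsqrt ▸ commute_sqrt _ _ hsq0 hcomm
  have key : ∀ w : E × F, (ψ (Q w.2), φ (P w.1)) = (P (ψ w.2), Q (φ w.1)) := by
    intro w
    have h0 := congrFun (congrArg DFunLike.coe hcommS.eq) (e.symm w)
    simp only [ContinuousLinearMap.mul_apply] at h0
    have h1 : e.symm (ψ (Q w.2), φ (P w.1)) = e.symm (P (ψ w.2), Q (φ w.1)) := h0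
    have h2 := congrArg e h1
    rw [heapp, heapp] at h2
    exact h2
  constructor
  · ext y
    have := key (0, y)
    simpa using congrArg Prod.fst this
  · ext x
    have := key (x, 0)
    simpa using (congrArg Prod.snd this).symm
end

section
/- Let E and F be finite dimensional complex inner product spaces and let φ: E → F be a ℂ-linear map with ‖φ‖ ≤ 1 and adjoint φ†. Let P be the unique positive self-adjoint square root of 1_E − φ†∘φ and Q the unique positive self-adjoint square root of 1_F − φ∘φ†. Equip E × F with the orthogonal direct sum inner product ⟨(x,y),(x',y')⟩ = ⟨x,x'⟩_E + ⟨y,y'⟩_F, and define R: E × F → E × F by R(x,y) = (P x + φ† y, φ x − Q y). Then R is self-adjoint and R ∘ R = id_{E×F}; in particular R is a surjective linear isometry of E × F. -/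
noncomputable section

variable {E F : Type*}
    [NormedAddCommGroup E] [InnerProductSpace ℂ E] [FiniteDimensional ℂ E]
    [NormedAddCommGroup F] [InnerProductSpace ℂ F] [FiniteDimensional ℂ F]

open ContinuousLinearMap in
/-- If `T` is a positive operator, `μ ≥ 0` and `T (T v) = μ² • v`, then `T v = μ • v`. -/
lemma sqrt_eig_aux {H : Type*} [NormedAddCommGroup H] [InnerProductSpace ℂ H]
    [CompleteSpace H] {T : H →L[ℂ] H} (hT : T.IsPositive) {μ : ℝ} (hμ : 0 ≤ μ)
    {v : H} (hv : T (T v) = ((μ : ℂ) ^ 2) • v) : T v = (μ : ℂ) • v := by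
  rcases eq_or_lt_of_le hμ with hμ0 | hμpos
  · have h0 : T (T v) = 0 := by rw [hv, ← hμ0]; simp
    have h1 : inner ℂ (T v) (T v) = inner ℂ v (T (T v)) := by
      simpa using hT.isSelfAdjoint.isSymmetric v (T v)
    rw [h0, inner_zero_right] at h1
    rw [inner_self_eq_zero.mp h1, ← hμ0]
    simp
  · set w := T v - (μ : ℂ) • v with hw
    have hTw : T w = -(μ : ℂ) • w := by
      have h1 : T w = (μ : ℂ) ^ 2 • v - (μ : ℂ) • T v := by rw [hw, map_sub, map_smul, hv]
      rw [h1, hw]; module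
    have hre : 0 ≤ RCLike.re (inner ℂ (T w) w) := hT.re_inner_nonneg_left w
    rw [hTw, inner_smul_left] at hre
    simp only [map_neg, Complex.conj_ofReal, neg_mul, map_neg] at hre
    rw [inner_self_eq_norm_sq_to_K] at hre
    have hre' : 0 ≤ -(μ * ‖w‖ ^ 2) := by
      simpa [← Complex.ofReal_pow, ← Complex.ofReal_mul] using hre
    have hw0 : w = 0 := by
      by_contra h
      have hn : 0 < ‖w‖ := norm_pos_iff.mpr h
      have : 0 < μ * ‖w‖ ^ 2 := by positivity
      linarith
    rw [hw, sub_eq_zero] at hw0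
    exact hw0

open ContinuousLinearMap in
/-- The key intertwining identity `Q ∘ φ = φ ∘ P`. -/
lemma intertwine_aux (φ : E →L[ℂ] F) (P : E →L[ℂ] E) (Q : F →L[ℂ] F)
    (hP : P.IsPositive) (hQ : Q.IsPositive)
    (hP2 : P ∘L P = 1 - adjoint φ ∘L φ)
    (hQ2 : Q ∘L Q = 1 - φ ∘L adjoint φ) :
    Q ∘L φ = φ ∘L P := by
  have hsymP := hP.isSelfAdjoint.isSymmetric
  have hn : Module.finrank ℂ E = Module.finrank ℂ E := rfl
  set b := hsymP.eigenvectorBasis hn with hb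
  set μ := hsymP.eigenvalues hn with hμdef
  have hPb : ∀ i, P (b i) = (μ i : ℂ) • b i := fun i => hsymP.apply_eigenvectorBasis hn i
  have hμ : ∀ i, 0 ≤ μ i := by
    intro i
    have h := hP.inner_nonneg_left (b i)
    rw [hPb i, inner_smul_left, inner_self_eq_norm_sq_to_K, b.orthonormal.1 i] at h
    simpa [Complex.conj_ofReal] using h
  have key : ∀ i, Q (φ (b i)) = (μ i : ℂ) • φ (b i) := by
    intro i
    apply sqrt_eig_aux hQ (hμ i)
    have e3 : P (P (b i)) = b i - adjoint φ (φ (b i)) := by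
      have h := ContinuousLinearMap.ext_iff.mp hP2 (b i)
      simpa using h
    have e4 : Q (Q (φ (b i))) = φ (b i) - φ (adjoint φ (φ (b i))) := by
      have h := ContinuousLinearMap.ext_iff.mp hQ2 (φ (b i))
      simpa using h
    rw [e4, ← map_sub, ← e3, hPb i, map_smul, hPb i, map_smul, map_smul, smul_smul, sq]
  apply ContinuousLinearMap.coe_injective
  apply Module.Basis.ext b.toBasis
  intro i
  simp [key i, hPb i]

/-- The map `R : E × F → E × F`, `R(x,y) = (P x + φ† y, φ x − Q y)`, on the
orthogonal direct sum `WithLp 2 (E × F)`. -/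
def Rmap (φ : E →L[ℂ] F) (P : E →L[ℂ] E) (Q : F →L[ℂ] F) :
    WithLp 2 (E × F) →ₗ[ℂ] WithLp 2 (E × F) where
  toFun p :=
    (WithLp.equiv 2 (E × F)).symm
      (P ((WithLp.equiv 2 (E × F)) p).1 +
          ContinuousLinearMap.adjoint φ ((WithLp.equiv 2 (E × F)) p).2,
        φ ((WithLp.equiv 2 (E × F)) p).1 - Q ((WithLp.equiv 2 (E × F)) p).2)
  map_add' p q := by
    apply (WithLp.equiv 2 (E × F)).injective
    ext <;> simp [Prod.add_def] <;> abel
  map_smul' c p := by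
    apply (WithLp.equiv 2 (E × F)).injective
    ext <;> simp [Prod.smul_def, smul_sub]

/-- **Statement 11.** Let `E`, `F` be finite dimensional complex inner product
spaces, `φ : E → F` with `‖φ‖ ≤ 1` and adjoint `φ†`, `P` the positive self-adjoint
square root of `1 − φ†φ`, and `Q` the positive self-adjoint square root of
`1 − φφ†`. Equip `E × F` with the orthogonal direct sum inner product and let
`R(x,y) = (P x + φ† y, φ x − Q y)`. Then `R` is self-adjoint and `R ∘ R = id`;
in particular `R` is a surjective linear isometry of `E × F`. -/
theorem stmt11 (φ : E →L[ℂ] F) (hφ : ‖φ‖ ≤ 1)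
    (P : E →L[ℂ] E) (Q : F →L[ℂ] F)
    (hP : P.IsPositive) (hQ : Q.IsPositive)
    (hP2 : P ∘L P = 1 - ContinuousLinearMap.adjoint φ ∘L φ)
    (hQ2 : Q ∘L Q = 1 - φ ∘L ContinuousLinearMap.adjoint φ) :
    (Rmap φ P Q).IsSymmetric ∧
      Rmap φ P Q ∘ₗ Rmap φ P Q = LinearMap.id ∧
      (∀ p : WithLp 2 (E × F), ‖Rmap φ P Q p‖ = ‖p‖) ∧
      Function.Surjective (Rmap φ P Q) := by
  set ψ := ContinuousLinearMap.adjoint φ with hψdef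
  have hQφ : Q ∘L φ = φ ∘L P := intertwine_aux φ P Q hP hQ hP2 hQ2
  have hPψ : ψ ∘L Q = P ∘L ψ := by
    have h := congrArg ContinuousLinearMap.adjoint hQφ
    rw [ContinuousLinearMap.adjoint_comp, ContinuousLinearMap.adjoint_comp,
      hP.isSelfAdjoint.adjoint_eq, hQ.isSelfAdjoint.adjoint_eq] at h
    exact h
  have hP2' : ∀ x, P (P x) = x - ψ (φ x) := fun x => by
    simpa using ContinuousLinearMap.ext_iff.mp hP2 x
  have hQ2' : ∀ y, Q (Q y) = y - φ (ψ y) := fun y => by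
    simpa using ContinuousLinearMap.ext_iff.mp hQ2 y
  have hQφ' : ∀ x, Q (φ x) = φ (P x) := fun x => by
    simpa using ContinuousLinearMap.ext_iff.mp hQφ x
  have hPψ' : ∀ y, ψ (Q y) = P (ψ y) := fun y => by
    simpa using ContinuousLinearMap.ext_iff.mp hPψ y
  have hfst : ∀ p : WithLp 2 (E × F), (Rmap φ P Q p).fst = P p.fst + ψ p.snd := fun p => rfl
  have hsnd : ∀ p : WithLp 2 (E × F), (Rmap φ P Q p).snd = φ p.fst - Q p.snd := fun p => rfl
  have hinv : ∀ p, Rmap φ P Q (Rmap φ P Q p) = p := by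
    intro p
    apply (WithLp.equiv 2 (E × F)).injective
    apply Prod.ext
    · show (Rmap φ P Q (Rmap φ P Q p)).fst = p.fst
      rw [hfst, hfst, hsnd, map_add, map_sub, hP2' p.fst, hPψ' p.snd]
      abel
    · show (Rmap φ P Q (Rmap φ P Q p)).snd = p.snd
      rw [hsnd, hfst, hsnd, map_add, map_sub, hQ2' p.snd, hQφ' p.fst]
      abel
  have hPinner : ∀ x y : E, inner ℂ (P x) y = inner ℂ x (P y) := fun x y => by
    nth_rewrite 1 [← hP.isSelfAdjoint.adjoint_eq]
    exact ContinuousLinearMap.adjoint_inner_left P y x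
  have hQinner : ∀ x y : F, inner ℂ (Q x) y = inner ℂ x (Q y) := fun x y => by
    nth_rewrite 1 [← hQ.isSelfAdjoint.adjoint_eq]
    exact ContinuousLinearMap.adjoint_inner_left Q y x
  have hsym : (Rmap φ P Q).IsSymmetric := by
    intro p q
    rw [WithLp.prod_inner_apply, WithLp.prod_inner_apply, WithLp.ofLp_fst, WithLp.ofLp_fst,
      WithLp.ofLp_fst, WithLp.ofLp_fst, WithLp.ofLp_snd, WithLp.ofLp_snd, WithLp.ofLp_snd,
      WithLp.ofLp_snd, hfst, hsnd, hfst, hsnd]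
    rw [inner_add_left, inner_sub_left, inner_add_right, inner_sub_right,
      hPinner p.fst q.fst, hQinner p.snd q.snd,
      ContinuousLinearMap.adjoint_inner_left φ q.fst p.snd,
      ContinuousLinearMap.adjoint_inner_right φ p.fst q.snd]
    ring
  have hcomp : Rmap φ P Q ∘ₗ Rmap φ P Q = LinearMap.id :=
    LinearMap.ext fun p => by simpa using hinv p
  refine ⟨hsym, hcomp, ?_, fun p => ⟨Rmap φ P Q p, hinv p⟩⟩
  intro p
  have hinner : inner ℂ (Rmap φ P Q p) (Rmap φ P Q p) = inner ℂ p p := by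
    rw [hsym p (Rmap φ P Q p), hinv p]
  have h3 : ‖Rmap φ P Q p‖ ^ 2 = ‖p‖ ^ 2 := by
    rw [← inner_self_eq_norm_sq (𝕜 := ℂ), ← inner_self_eq_norm_sq (𝕜 := ℂ), hinner]
  rw [← Real.sqrt_sq (norm_nonneg (Rmap φ P Q p)), ← Real.sqrt_sq (norm_nonneg p), h3]

end
end

section
/- Let C be an abelian category equipped with additive degree and rank functions deg and rk as in the context. Let X be a nonzero object and α ∈ ℝ such that μ(Y) ≤ α for every nonzero subobject Y of X. If Z₁ and Z₂ are nonzero subobjects of X with μ(Z₁) = μ(Z₂) = α, then their join Z₁ ⊔ Z₂ in the subobject lattice of X satisfies μ(Z₁ ⊔ Z₂) = α. -/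
open CategoryTheory CategoryTheory.Limits

universe v u

variable {C : Type u} [Category.{v} C] [Abelian C]

/-- The slope `μ(X) = deg X / rk X` associated to degree and rank functions. -/
noncomputable def hnSlope (deg : C → ℝ) (rk : C → ℤ) (X : C) : ℝ :=
  deg X / (rk X : ℝ)

/-- `X` is semistable if it is nonzero and `μ(Y) ≤ μ(X)` for every nonzero
subobject `Y` of `X`. -/
def HNSemistable (deg : C → ℝ) (rk : C → ℤ) (X : C) : Prop :=
  ¬ IsZero X ∧
    ∀ (Y : C) (f : Y ⟶ X), Mono f → ¬ IsZero Y →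
      hnSlope deg rk Y ≤ hnSlope deg rk X

theorem supSES {X : C} (Z₁ Z₂ : Subobject X) :
    ∃ S : ShortComplex C, S.ShortExact ∧ S.X₁ = ((Z₁ ⊓ Z₂ : Subobject X) : C) ∧
      S.X₂ = ((Z₁ : C) ⊞ (Z₂ : C)) ∧ S.X₃ = ((Z₁ ⊔ Z₂ : Subobject X) : C) := by
  set W := (Z₁ ⊓ Z₂ : Subobject X)
  set T := (Z₁ ⊔ Z₂ : Subobject X)
  let a : (W : C) ⟶ (Z₁ : C) := Subobject.ofLE _ _ inf_le_left
  let b : (W : C) ⟶ (Z₂ : C) := Subobject.ofLE _ _ inf_le_right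
  let u : (Z₁ : C) ⟶ (T : C) := Subobject.ofLE _ _ le_sup_left
  let v : (Z₂ : C) ⟶ (T : C) := Subobject.ofLE _ _ le_sup_right
  have hau : a ≫ Z₁.arrow = W.arrow := Subobject.ofLE_arrow _
  have hbv : b ≫ Z₂.arrow = W.arrow := Subobject.ofLE_arrow _
  have huT : u ≫ T.arrow = Z₁.arrow := Subobject.ofLE_arrow _
  have hvT : v ≫ T.arrow = Z₂.arrow := Subobject.ofLE_arrow _
  let f : (W : C) ⟶ (Z₁ : C) ⊞ (Z₂ : C) := biprod.lift a b
  let g : (Z₁ : C) ⊞ (Z₂ : C) ⟶ (T : C) := biprod.desc u (-v)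
  have hfg : f ≫ g = 0 := by
    simp [f, g, a, b, u, v, Subobject.ofLE_comp_ofLE]
  refine ⟨ShortComplex.mk f g hfg, ?_, rfl, rfl, rfl⟩
  have hmono : Mono f := by
    have : f ≫ biprod.fst = a := by simp [f]
    exact mono_of_mono_fac this
  have hepi : Epi g := by
    constructor
    intro T' h₁ h₂ hcomp
    rw [← sub_eq_zero] at hcomp ⊢
    rw [← Preadditive.comp_sub] at hcomp
    set h := h₁ - h₂ with hh
    have hu : u ≫ h = 0 := by
      have := biprod.inl ≫= hcomp; simpa [g] using this
    have hv : v ≫ h = 0 := by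
      have := biprod.inr ≫= hcomp
      simp only [g, biprod.inr_desc_assoc, Preadditive.neg_comp, comp_zero, neg_eq_zero] at this
      exact this
    have h1 : Z₁ ≤ Subobject.mk (kernel.ι h ≫ T.arrow) := by
      refine Subobject.le_mk_of_comm (kernel.lift h u hu) ?_
      rw [← Category.assoc, kernel.lift_ι]; exact huT
    have h2 : Z₂ ≤ Subobject.mk (kernel.ι h ≫ T.arrow) := by
      refine Subobject.le_mk_of_comm (kernel.lift h v hv) ?_
      rw [← Category.assoc, kernel.lift_ι]; exact hvT
    have hT : T ≤ Subobject.mk (kernel.ι h ≫ T.arrow) := sup_le h1 h2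
    have hw : Subobject.ofLEMk T _ hT ≫ (kernel.ι h ≫ T.arrow) = T.arrow :=
      Subobject.ofLEMk_comp hT
    have hwι : Subobject.ofLEMk T _ hT ≫ kernel.ι h = 𝟙 (T : C) := by
      rw [← cancel_mono T.arrow, Category.assoc, hw, Category.id_comp]
    calc h = (Subobject.ofLEMk T _ hT ≫ kernel.ι h) ≫ h := by rw [hwι, Category.id_comp]
    _ = 0 := by rw [Category.assoc, kernel.condition, comp_zero]
  refine { exact := ?_, mono_f := hmono, epi_g := hepi }
  apply ShortComplex.exact_of_f_is_kernel
  have htt : ∀ {P : C} (x : P ⟶ (Z₁ : C) ⊞ (Z₂ : C)), x ≫ g = 0 →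
      (x ≫ biprod.fst) ≫ Z₁.arrow = (x ≫ biprod.snd) ≫ Z₂.arrow := by
    intro P x hx
    have h1 : (x ≫ biprod.fst) ≫ u = (x ≫ biprod.snd) ≫ v := by
      rw [show g = biprod.fst ≫ u + biprod.snd ≫ (-v) by
        apply biprod.hom_ext' <;> simp [g]] at hx
      rw [← sub_eq_zero]
      simpa [Preadditive.comp_add, sub_eq_add_neg] using hx
    rw [← huT, ← hvT, ← Category.assoc, ← Category.assoc, h1]
  have hfac : ∀ {P : C} (x : P ⟶ (Z₁ : C) ⊞ (Z₂ : C)) (hx : x ≫ g = 0),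
      W.Factors ((x ≫ biprod.fst) ≫ Z₁.arrow) := by
    intro P x hx
    rw [Subobject.inf_factors]
    exact ⟨(Subobject.factors_iff _ _).mpr ⟨x ≫ biprod.fst, rfl⟩,
      (Subobject.factors_iff _ _).mpr ⟨x ≫ biprod.snd, (htt x hx).symm⟩⟩
  have hfaccomp : ∀ {P : C} (x : P ⟶ (Z₁ : C) ⊞ (Z₂ : C)) (hx : x ≫ g = 0),
      W.factorThru _ (hfac x hx) ≫ f = x := by
    intro P x hx
    apply biprod.hom_ext
    · rw [← cancel_mono Z₁.arrow]
      simp only [Category.assoc, f, biprod.lift_fst]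
      rw [hau, Subobject.factorThru_arrow]
    · rw [← cancel_mono Z₂.arrow]
      simp only [Category.assoc, f, biprod.lift_snd]
      rw [hbv, Subobject.factorThru_arrow]
      simpa only [Category.assoc] using htt x hx
  exact KernelFork.IsLimit.ofι f hfg (fun {P} x hx => W.factorThru _ (hfac x hx))
    (fun {P} x hx => hfaccomp x hx)
    (fun {P} x hx m hm => by rw [← cancel_mono f, hm, hfaccomp x hx])

theorem biprodSES' (A B : C) :
    (ShortComplex.mk (biprod.inl : A ⟶ A ⊞ B) (biprod.snd : A ⊞ B ⟶ B)
      (by simp)).ShortExact :=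
  (ShortComplex.Splitting.ofHasBinaryBiproduct A B).shortExact

theorem deg_zero_of_isZero (deg : C → ℝ)
    (hdeg : ∀ S : ShortComplex C, S.ShortExact → deg S.X₂ = deg S.X₁ + deg S.X₃)
    (Z : C) (hZ : IsZero Z) : deg Z = 0 := by
  have hse : (ShortComplex.mk (𝟙 Z) (𝟙 Z) (hZ.eq_of_src _ _)).ShortExact := by
    refine { exact := ShortComplex.exact_of_isZero_X₂ _ hZ, mono_f := ?_, epi_g := ?_ } <;>
      infer_instance
  have := hdeg _ hse
  simp only at this
  linarith

/-- **Statement 18.** In an abelian category with additive degree and rank functions,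
let `X` be nonzero and `α ∈ ℝ` with `μ(Y) ≤ α` for every nonzero subobject `Y` of
`X`. If `Z₁`, `Z₂` are nonzero subobjects of `X` of slope `α`, then so is their
join `Z₁ ⊔ Z₂` in the subobject lattice of `X`. -/
theorem stmt18 (deg : C → ℝ) (rk : C → ℤ)
    (hdeg : ∀ S : ShortComplex C, S.ShortExact → deg S.X₂ = deg S.X₁ + deg S.X₃)
    (hrk : ∀ S : ShortComplex C, S.ShortExact → rk S.X₂ = rk S.X₁ + rk S.X₃)
    (hrk_pos : ∀ X : C, ¬ IsZero X → 1 ≤ rk X)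
    (hrk_zero : ∀ X : C, IsZero X → rk X = 0)
    {X : C} (hX : ¬ IsZero X) (α : ℝ)
    (hbound : ∀ Y : Subobject X, ¬ IsZero (Y : C) → hnSlope deg rk (Y : C) ≤ α)
    (Z₁ Z₂ : Subobject X)
    (hZ₁ : ¬ IsZero (Z₁ : C)) (hZ₂ : ¬ IsZero (Z₂ : C))
    (hμ₁ : hnSlope deg rk (Z₁ : C) = α) (hμ₂ : hnSlope deg rk (Z₂ : C) = α) :
    hnSlope deg rk ((Z₁ ⊔ Z₂ : Subobject X) : C) = α := by
  obtain ⟨S, hse, e₁, e₂, e₃⟩ := supSES Z₁ Z₂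
  have hd := hdeg S hse
  have hr := hrk S hse
  rw [e₁, e₂, e₃] at hd hr
  have hdB := hdeg _ (biprodSES' (Z₁ : C) (Z₂ : C))
  have hrB := hrk _ (biprodSES' (Z₁ : C) (Z₂ : C))
  simp only at hdB hrB
  -- T = Z₁ ⊔ Z₂ is nonzero
  have hT : ¬ IsZero ((Z₁ ⊔ Z₂ : Subobject X) : C) := by
    intro h
    exact hZ₁ (IsZero.of_mono (Subobject.ofLE Z₁ (Z₁ ⊔ Z₂) le_sup_left) h)
  -- ranks
  have hr₁ : (1 : ℤ) ≤ rk (Z₁ : C) := hrk_pos _ hZ₁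
  have hr₂ : (1 : ℤ) ≤ rk (Z₂ : C) := hrk_pos _ hZ₂
  have hrT : (1 : ℤ) ≤ rk ((Z₁ ⊔ Z₂ : Subobject X) : C) := hrk_pos _ hT
  have hr₁' : ((rk (Z₁ : C) : ℝ)) ≠ 0 := by exact_mod_cast (by omega : rk (Z₁ : C) ≠ 0)
  have hr₂' : ((rk (Z₂ : C) : ℝ)) ≠ 0 := by exact_mod_cast (by omega : rk (Z₂ : C) ≠ 0)
  have hrT' : (0 : ℝ) < (rk ((Z₁ ⊔ Z₂ : Subobject X) : C) : ℝ) := by exact_mod_cast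
    (by omega : (0:ℤ) < rk ((Z₁ ⊔ Z₂ : Subobject X) : C))
  have hd₁ : deg (Z₁ : C) = α * (rk (Z₁ : C) : ℝ) := by
    rw [hnSlope, div_eq_iff hr₁'] at hμ₁; linarith [hμ₁]
  have hd₂ : deg (Z₂ : C) = α * (rk (Z₂ : C) : ℝ) := by
    rw [hnSlope, div_eq_iff hr₂'] at hμ₂; linarith [hμ₂]
  -- bound on the intersection W
  have hW : deg ((Z₁ ⊓ Z₂ : Subobject X) : C) ≤ α * (rk ((Z₁ ⊓ Z₂ : Subobject X) : C) : ℝ) := by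
    by_cases h : IsZero ((Z₁ ⊓ Z₂ : Subobject X) : C)
    · rw [deg_zero_of_isZero deg hdeg _ h, hrk_zero _ h]; simp
    · have hb := hbound _ h
      have hpos : (0 : ℝ) < (rk ((Z₁ ⊓ Z₂ : Subobject X) : C) : ℝ) := by
        exact_mod_cast (by have := hrk_pos _ h; omega : (0:ℤ) < rk ((Z₁ ⊓ Z₂ : Subobject X) : C))
      rw [hnSlope, div_le_iff₀ hpos] at hb
      linarith
  -- upper bound on T
  have hTub := hbound _ hT
  rw [hnSlope, div_le_iff₀ hrT'] at hTub
  -- rank relation cast to ℝ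
  have hrR : (rk ((Z₁ : C) ⊞ (Z₂ : C)) : ℝ)
      = (rk ((Z₁ ⊓ Z₂ : Subobject X) : C) : ℝ) + (rk ((Z₁ ⊔ Z₂ : Subobject X) : C) : ℝ) := by
    exact_mod_cast congrArg (Int.cast : ℤ → ℝ) hr
  have hrBR : (rk ((Z₁ : C) ⊞ (Z₂ : C)) : ℝ) = (rk (Z₁ : C) : ℝ) + (rk (Z₂ : C) : ℝ) := by
    exact_mod_cast congrArg (Int.cast : ℤ → ℝ) hrB
  have key : deg ((Z₁ ⊔ Z₂ : Subobject X) : C)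
      = α * (rk ((Z₁ ⊔ Z₂ : Subobject X) : C) : ℝ) := by
    have e : (rk ((Z₁ ⊔ Z₂ : Subobject X) : C) : ℝ)
        = (rk (Z₁ : C) : ℝ) + (rk (Z₂ : C) : ℝ) - (rk ((Z₁ ⊓ Z₂ : Subobject X) : C) : ℝ) := by
      linarith [hrR, hrBR]
    have e' : α * (rk ((Z₁ ⊔ Z₂ : Subobject X) : C) : ℝ)
        = α * (rk (Z₁ : C) : ℝ) + α * (rk (Z₂ : C) : ℝ)
          - α * (rk ((Z₁ ⊓ Z₂ : Subobject X) : C) : ℝ) := by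
      rw [e]; ring
    linarith [hW, hTub, hd, hdB, hd₁, hd₂, e']
  rw [hnSlope, key, mul_div_assoc, div_self (ne_of_gt hrT'), mul_one]
end
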